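/- For every finite simple graph G, the treedepth td(G) equals the minimum number k ∈ ℕ such that Splitter wins the radius-∞ Splitter Game on G within k rounds. -/

import Mathlib

/-- An elimination forest of a graph `G`, encoded by its ancestor (partial) order on `V(G)`:
`le u v` means "`u` is an ancestor of `v` (or `u = v`)". The set of ancestors of any vertex
is a chain (this makes the order a rooted forest), and for every edge `uv` of `G` one of
`u`, `v` is an ancestor of the other. -/
structure ElimForest {V : Type} (G : SimpleGraph V) where
  le : V → V → Prop
  le_refl : ∀ v, le v v
  le_trans : ∀ u v w, le u v → le v w → le u w
  le_antisymm : ∀ u v, le u v → le v u → u = v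
  ancestors_chain : ∀ v u w, le u v → le w v → le u w ∨ le w u
  adj_comparable : ∀ u v, G.Adj u v → le u v ∨ le v u

/-- The depth of an elimination forest: the maximum number of vertices on a root-to-leaf
path, i.e. the maximum number of ancestors (including itself) of a vertex. -/
noncomputable def ElimForest.depth {V : Type} {G : SimpleGraph V} (F : ElimForest G) : ℕ :=
  ⨆ v : V, Set.ncard {u | F.le u v}

/-- The treedepth of `G`: the minimum depth of an elimination forest of `G`. -/
noncomputable def treedepth {V : Type} (G : SimpleGraph V) : ℕ :=
  sInf {d | ∃ F : ElimForest G, F.depth = d}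

/-- `SplitterWins k V G`: Splitter wins the radius-∞ Splitter Game on `G` within `k` rounds.
Within `0` rounds Splitter wins iff `G` has no vertices; within `k+1` rounds he wins iff for
every connected component `C` (chosen by Connector) there is a vertex `v` of `C` whose
deletion leaves a graph on which Splitter wins within `k` rounds. -/
def SplitterWins : ℕ → (V : Type) → SimpleGraph V → Prop
  | 0, V, _ => IsEmpty V
  | k + 1, V, G => ∀ C : G.ConnectedComponent, ∃ v : V, v ∈ C.supp ∧
      SplitterWins k (↥(C.supp \ {v})) (G.induce (C.supp \ {v}))

namespace TdAux

open SimpleGraph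

lemma ncard_le_depth {V : Type} [Finite V] {G : SimpleGraph V} (F : ElimForest G) (x : V) :
    ({u | F.le u x}).ncard ≤ F.depth :=
  le_ciSup (f := fun v : V => ({u | F.le u v}).ncard)
    (Set.Finite.bddAbove (Set.finite_range _)) x

lemma depth_le {V : Type} [Finite V] {G : SimpleGraph V} (F : ElimForest G) {k : ℕ}
    (h : ∀ x : V, ({u | F.le u x}).ncard ≤ k) : F.depth ≤ k := by
  rcases isEmpty_or_nonempty V with hV | hV
  · rw [ElimForest.depth, ciSup_of_empty]
    exact bot_le
  · exact ciSup_le h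

/-- A forest of depth ≤ k gives Splitter a winning strategy in k rounds. -/
lemma wins_of_forest : ∀ (k : ℕ) (V : Type) [Finite V] (G : SimpleGraph V)
    (F : ElimForest G), F.depth ≤ k → SplitterWins k V G := by
  intro k
  induction k with
  | zero =>
    intro V _ G F hF
    simp only [SplitterWins]
    by_contra h
    rw [not_isEmpty_iff] at h
    obtain ⟨x⟩ := h
    have h1 : 0 < ({u | F.le u x}).ncard :=
      (Set.ncard_pos (Set.toFinite _)).mpr ⟨x, F.le_refl x⟩
    have h2 := ncard_le_depth F x
    omega
  | succ k ih =>
    intro V _ G F hF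
    simp only [SplitterWins]
    intro C
    obtain ⟨x₀, hx₀⟩ : ∃ x, x ∈ C.supp := by
      obtain ⟨x, rfl⟩ := C.exists_rep
      exact ⟨x, rfl⟩
    obtain ⟨v, hv, hmin⟩ := Set.exists_min_image C.supp
      (fun u => ({w | F.le w u}).ncard) (Set.toFinite _) ⟨x₀, hx₀⟩
    have hmin' : ∀ u ∈ C.supp, F.le u v → u = v := by
      intro u hu hle
      by_contra hne
      have hss : {w | F.le w u} ⊂ {w | F.le w v} := by
        constructor
        · intro w hw
          exact F.le_trans w u v hw hle
        · intro hsub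
          exact hne (F.le_antisymm u v hle (hsub (F.le_refl v)))
      have hlt := Set.ncard_lt_ncard hss (Set.toFinite _)
      have := hmin u hu
      omega
    have hbel : ∀ u ∈ C.supp, F.le v u := by
      have key : ∀ {a b : V} (p : G.Walk a b), a ∈ C.supp → F.le v a → F.le v b := by
        intro a b p
        induction p with
        | nil => exact fun _ h => h
        | @cons a c b hadj q ih2 =>
          intro h1 h2
          have hc : c ∈ C.supp := by
            rw [SimpleGraph.ConnectedComponent.mem_supp_iff] at h1 ⊢
            rw [← h1]
            exact (SimpleGraph.ConnectedComponent.sound hadj.reachable).symm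
          apply ih2 hc
          rcases F.adj_comparable _ _ hadj with hle | hle
          · exact F.le_trans _ _ _ h2 hle
          · rcases F.ancestors_chain _ _ _ h2 hle with h3 | h3
            · exact h3
            · rw [hmin' _ hc h3]
              exact F.le_refl v
      intro u hu
      have hreach : G.Reachable v u := by
        apply SimpleGraph.ConnectedComponent.exact
        rw [SimpleGraph.ConnectedComponent.mem_supp_iff] at hv hu
        rw [hv, hu]
      obtain ⟨p⟩ := hreach
      exact key p hv (F.le_refl v)
    refine ⟨v, hv, ?_⟩
    let F' : ElimForest (G.induce (C.supp \ {v})) :=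
      { le := fun a b => F.le a.1 b.1
        le_refl := fun a => F.le_refl _
        le_trans := fun a b c => F.le_trans _ _ _
        le_antisymm := fun a b h1 h2 => Subtype.ext (F.le_antisymm _ _ h1 h2)
        ancestors_chain := fun a b c => F.ancestors_chain _ _ _
        adj_comparable := fun a b h => F.adj_comparable _ _ h }
    apply ih _ _ F'
    apply depth_le
    intro b
    have himg : Subtype.val '' {a : ↥(C.supp \ {v}) | F.le a.1 b.1} ⊆
        {u | F.le u b.1} \ {v} := by
      rintro _ ⟨a, ha, rfl⟩
      exact ⟨ha, a.2.2⟩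
    have hcalc1 : ({a : ↥(C.supp \ {v}) | F'.le a b}).ncard
        = (Subtype.val '' {a : ↥(C.supp \ {v}) | F.le a.1 b.1}).ncard :=
      (Set.ncard_image_of_injective _ Subtype.val_injective).symm
    have hcalc2 := Set.ncard_le_ncard himg (Set.toFinite _)
    have hcalc3 : (({u | F.le u b.1}) \ {v}).ncard = ({u | F.le u b.1}).ncard - 1 :=
      Set.ncard_diff_singleton_of_mem (hbel b.1 b.2.1)
    have hcalc4 := ncard_le_depth F b.1
    omega

section Build

variable {V : Type} (G : SimpleGraph V) (r : G.ConnectedComponent → V)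
  (F : ∀ C : G.ConnectedComponent, ElimForest (G.induce (C.supp \ {r C})))

/-- Strict descent inside a component's sub-forest. -/
def DD (C : G.ConnectedComponent) (a b : V) : Prop :=
  ∃ (ha : a ∈ C.supp \ {r C}) (hb : b ∈ C.supp \ {r C}), (F C).le ⟨a, ha⟩ ⟨b, hb⟩

/-- The glued ancestor order. -/
def bigLe (a b : V) : Prop :=
  a = b ∨ (G.connectedComponentMk a = G.connectedComponentMk b ∧
    (a = r (G.connectedComponentMk b) ∨ DD G r F (G.connectedComponentMk b) a b))

/-- The glued elimination forest. -/
def bigForest : ElimForest G where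
  le := bigLe G r F
  le_refl _ := Or.inl rfl
  le_trans := by
    intro a b c hab hbc
    rcases hab with rfl | ⟨h1, h2⟩
    · exact hbc
    rcases hbc with rfl | ⟨h1', h2'⟩
    · exact Or.inr ⟨h1, h2⟩
    refine Or.inr ⟨h1.trans h1', ?_⟩
    rw [h1'] at h2
    rcases h2 with h2 | h2
    · exact Or.inl h2
    rcases h2' with h2' | h2'
    · obtain ⟨ha, hb, _⟩ := h2
      exact (hb.2 h2').elim
    · obtain ⟨ha, hb, hle⟩ := h2
      obtain ⟨hb', hc, hle'⟩ := h2'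
      exact Or.inr ⟨ha, hc, (F _).le_trans _ _ _ hle hle'⟩
  le_antisymm := by
    intro a b hab hba
    rcases hab with rfl | ⟨h1, h2⟩
    · rfl
    rcases hba with rfl | ⟨h1', h2'⟩
    · rfl
    rw [h1] at h2'
    rcases h2 with h2 | h2 <;> rcases h2' with h2' | h2'
    · exact h2.trans h2'.symm
    · obtain ⟨hb, ha, _⟩ := h2'
      exact (ha.2 h2).elim
    · obtain ⟨ha, hb, _⟩ := h2
      exact (hb.2 h2').elim
    · obtain ⟨ha, hb, hle⟩ := h2
      obtain ⟨hb', ha', hle'⟩ := h2'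
      exact congrArg Subtype.val ((F _).le_antisymm _ _ hle hle')
  ancestors_chain := by
    intro x u w hu hw
    rcases hu with rfl | ⟨h1, h2⟩
    · exact Or.inr hw
    rcases hw with rfl | ⟨h1', h2'⟩
    · exact Or.inl (Or.inr ⟨h1, h2⟩)
    rcases h2 with h2 | h2
    · refine Or.inl (Or.inr ⟨h1.trans h1'.symm, Or.inl ?_⟩)
      rw [h1']
      exact h2
    rcases h2' with h2' | h2'
    · refine Or.inr (Or.inr ⟨h1'.trans h1.symm, Or.inl ?_⟩)
      rw [h1]
      exact h2'
    · obtain ⟨hu1, hx1, hle⟩ := h2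
      obtain ⟨hw1, hx2, hle'⟩ := h2'
      rcases (F _).ancestors_chain _ _ _ hle hle' with h3 | h3
      · refine Or.inl (Or.inr ⟨h1.trans h1'.symm, Or.inr ?_⟩)
        rw [h1']
        exact ⟨hu1, hw1, h3⟩
      · refine Or.inr (Or.inr ⟨h1'.trans h1.symm, Or.inr ?_⟩)
        rw [h1]
        exact ⟨hw1, hu1, h3⟩
  adj_comparable := by
    intro u w hadj
    have hcc : G.connectedComponentMk u = G.connectedComponentMk w :=
      SimpleGraph.ConnectedComponent.sound hadj.reachable
    by_cases hu : u = r (G.connectedComponentMk w)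
    · exact Or.inl (Or.inr ⟨hcc, Or.inl hu⟩)
    by_cases hw : w = r (G.connectedComponentMk u)
    · exact Or.inr (Or.inr ⟨hcc.symm, Or.inl hw⟩)
    have hu' : u ∈ (G.connectedComponentMk w).supp \ {r (G.connectedComponentMk w)} :=
      ⟨(SimpleGraph.ConnectedComponent.mem_supp_iff _ _).mpr hcc, hu⟩
    have hw' : w ∈ (G.connectedComponentMk w).supp \ {r (G.connectedComponentMk w)} :=
      ⟨(SimpleGraph.ConnectedComponent.mem_supp_iff _ _).mpr rfl, fun he => hw (by rw [hcc]; exact he)⟩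
    have hadj' : (G.induce ((G.connectedComponentMk w).supp \ {r (G.connectedComponentMk w)})).Adj
        ⟨u, hu'⟩ ⟨w, hw'⟩ := hadj
    rcases (F _).adj_comparable _ _ hadj' with hle | hle
    · exact Or.inl (Or.inr ⟨hcc, Or.inr ⟨hu', hw', hle⟩⟩)
    · exact Or.inr (Or.inr ⟨hcc.symm, Or.inr (by rw [hcc]; exact ⟨hw', hu', hle⟩)⟩)

lemma bigForest_depth_le [Finite V] {k : ℕ}
    (hF : ∀ C, (F C).depth ≤ k) : (bigForest G r F).depth ≤ k + 1 := by
  apply depth_le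
  intro x
  by_cases hx : x = r (G.connectedComponentMk x)
  · have hset : {u | (bigForest G r F).le u x} = {x} := by
      ext u
      simp only [Set.mem_setOf_eq, Set.mem_singleton_iff]
      constructor
      · rintro (rfl | ⟨h1, h2 | h2⟩)
        · rfl
        · exact h2.trans hx.symm
        · obtain ⟨_, hb, _⟩ := h2
          exact (hb.2 hx).elim
      · rintro rfl
        exact Or.inl rfl
    rw [hset, Set.ncard_singleton]
    omega
  · have hmem : x ∈ (G.connectedComponentMk x).supp \ {r (G.connectedComponentMk x)} :=
      ⟨(SimpleGraph.ConnectedComponent.mem_supp_iff _ _).mpr rfl, hx⟩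
    have hsub : {u | (bigForest G r F).le u x} ⊆
        insert (r (G.connectedComponentMk x))
          (Subtype.val '' {a | (F (G.connectedComponentMk x)).le a ⟨x, hmem⟩}) := by
      intro u hu
      rcases hu with rfl | ⟨h1, h2 | h2⟩
      · exact Set.mem_insert_iff.mpr (Or.inr ⟨⟨u, hmem⟩, (F _).le_refl _, rfl⟩)
      · exact Set.mem_insert_iff.mpr (Or.inl h2)
      · obtain ⟨ha, hb, hle⟩ := h2
        exact Set.mem_insert_iff.mpr (Or.inr ⟨⟨u, ha⟩, hle, rfl⟩)
    have c1 := Set.ncard_le_ncard hsub (Set.toFinite _)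
    have c2 := Set.ncard_insert_le (r (G.connectedComponentMk x))
      (Subtype.val '' {a | (F (G.connectedComponentMk x)).le a ⟨x, hmem⟩})
    have c3 : (Subtype.val '' {a | (F (G.connectedComponentMk x)).le a ⟨x, hmem⟩}).ncard
        = ({a | (F (G.connectedComponentMk x)).le a ⟨x, hmem⟩}).ncard :=
      Set.ncard_image_of_injective _ Subtype.val_injective
    have c4 := ncard_le_depth (F (G.connectedComponentMk x)) ⟨x, hmem⟩
    have c5 := hF (G.connectedComponentMk x)
    omega

end Build

/-- Winning in k rounds gives a forest of depth ≤ k. -/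
lemma forest_of_wins : ∀ (k : ℕ) (V : Type) [Finite V] (G : SimpleGraph V),
    SplitterWins k V G → ∃ F : ElimForest G, F.depth ≤ k := by
  intro k
  induction k with
  | zero =>
    intro V _ G h
    simp only [SplitterWins] at h
    haveI := h
    refine ⟨⟨Eq, fun _ => rfl, fun _ _ _ h1 h2 => h1.trans h2, fun _ _ h1 _ => h1,
      fun v _ _ _ _ => isEmptyElim v, fun u _ _ => isEmptyElim u⟩, ?_⟩
    apply depth_le
    intro x
    exact isEmptyElim x
  | succ k ih =>
    intro V _ G h
    simp only [SplitterWins] at h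
    choose r hr hw using h
    choose F hF using fun C => ih _ (G.induce (C.supp \ {r C})) (hw C)
    exact ⟨bigForest G r F, bigForest_depth_le G r F hF⟩

lemma exists_forest {V : Type} [Finite V] (G : SimpleGraph V) : Nonempty (ElimForest G) := by
  obtain ⟨n, ⟨e⟩⟩ := Finite.exists_equiv_fin V
  exact ⟨{ le := fun a b => e a ≤ e b
           le_refl := fun _ => le_refl _
           le_trans := fun _ _ _ => le_trans
           le_antisymm := fun _ _ h1 h2 => e.injective (le_antisymm h1 h2)
           ancestors_chain := fun _ u w _ _ => le_total (e u) (e w)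
           adj_comparable := fun u w _ => le_total (e u) (e w) }⟩

end TdAux

/-- Treedepth equals the minimum number of rounds Splitter needs to win the radius-∞
Splitter Game. -/
theorem treedepth_eq_splitter {V : Type} [Finite V] (G : SimpleGraph V) :
    treedepth G = sInf {k | SplitterWins k V G} := by
  obtain ⟨F₀⟩ := TdAux.exists_forest G
  apply le_antisymm
  · have hB : {k | SplitterWins k V G}.Nonempty :=
      ⟨F₀.depth, TdAux.wins_of_forest _ V G F₀ le_rfl⟩
    have hmem := Nat.sInf_mem hB
    obtain ⟨F, hF⟩ := TdAux.forest_of_wins _ V G hmem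
    exact le_trans (Nat.sInf_le ⟨F, rfl⟩) hF
  · have hA : {d | ∃ F : ElimForest G, F.depth = d}.Nonempty := ⟨F₀.depth, F₀, rfl⟩
    obtain ⟨F, hF⟩ := Nat.sInf_mem hA
    calc sInf {k | SplitterWins k V G} ≤ F.depth :=
          Nat.sInf_le (TdAux.wins_of_forest _ V G F le_rfl)
      _ = treedepth G := hF
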